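/- With step size γ = με/(2εμ·supL + 2σ²), after k = ⌈2·log(2ε₀/ε)·(supL/μ + σ²/(μ²ε))⌉ SGD iterations, E‖x_k - x⋆‖² ≤ ε, where ε₀ = ‖x_0 - x⋆‖². -/

import Mathlib

open scoped RealInnerProductSpace BigOperators

variable {E : Type*} [NormedAddCommGroup E] [InnerProductSpace ℝ E] [CompleteSpace E]

lemma fderiv_inner_eq (f : E → ℝ) (x v : E) : fderiv ℝ f x v = ⟪gradient f x, v⟫ := by
  rw [gradient, InnerProductSpace.toDual_symm_apply]

lemma hasDerivAt_line (f : E → ℝ) (hd : Differentiable ℝ f) (x v : E) (t : ℝ) :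
    HasDerivAt (fun s : ℝ => f (x + s • v)) ⟪gradient f (x + t • v), v⟫ t := by
  have hc : HasDerivAt (fun s : ℝ => x + s • v) v t := by
    simpa using ((hasDerivAt_id t).smul_const v).const_add x
  have := ((hd (x + t • v)).hasFDerivAt).comp_hasDerivAt t hc
  rw [fderiv_inner_eq f (x + t • v) v] at this; exact this

lemma subgrad (f : E → ℝ) (hc : ConvexOn ℝ Set.univ f) (hd : Differentiable ℝ f) (x y : E) :
    f x + ⟪gradient f x, y - x⟫ ≤ f y := by
  set g : ℝ → ℝ := fun s => f (x + s • (y - x)) with hg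
  have hgc : ConvexOn ℝ Set.univ g := by
    have := hc.comp_affineMap (AffineMap.lineMap x y)
    simp only [Set.preimage_univ] at this
    have e : g = f ∘ AffineMap.lineMap x y := by
      funext s
      simp [hg, AffineMap.lineMap_apply, Function.comp]
      rw [add_comm]
    rw [e]; exact this
  have hder : HasDerivAt g ⟪gradient f x, y - x⟫ 0 := by
    simpa using hasDerivAt_line f hd x (y - x) 0
  have := hgc.le_slope_of_hasDerivAt (Set.mem_univ 0) (Set.mem_univ 1) zero_lt_one hder
  rw [slope_def_field] at this
  simp only [hg] at this
  simp only [zero_smul, add_zero, one_smul] at this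
  have h1 : x + (y - x) = y := by abel
  rw [h1] at this
  linarith [this]

lemma descent (f : E → ℝ) (hd : Differentiable ℝ f) (L : ℝ)
    (hlip : ∀ a b, ‖gradient f a - gradient f b‖ ≤ L * ‖a - b‖) (x y : E) :
    f y ≤ f x + ⟪gradient f x, y - x⟫ + L / 2 * ‖y - x‖ ^ 2 := by
  set v := y - x with hv
  set h : ℝ → ℝ := fun t => f (x + t • v) - t * ⟪gradient f x, v⟫ - L * ‖v‖ ^ 2 / 2 * t ^ 2
    with hh
  have hder : ∀ t : ℝ, HasDerivAt h
      (⟪gradient f (x + t • v), v⟫ - ⟪gradient f x, v⟫ - L * ‖v‖ ^ 2 / 2 * (2 * t)) t := by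
    intro t
    have := ((hasDerivAt_line f hd x v t).sub
      (hasDerivAt_mul_const (⟪gradient f x, v⟫ : ℝ))).sub ((hasDerivAt_pow 2 t).const_mul (L * ‖v‖ ^ 2 / 2))
    rw [show ((2:ℕ):ℝ) * t ^ (2 - 1) = 2 * t by norm_num] at this; exact this
  have hanti : AntitoneOn h (Set.Icc (0:ℝ) 1) := by
    apply antitoneOn_of_deriv_nonpos (convex_Icc 0 1)
    · exact Continuous.continuousOn (by
        exact ((hd.continuous.comp (by continuity)).sub (by continuity)).sub (by continuity))
    · intro t ht
      exact ((hder t).differentiableAt).differentiableWithinAt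
    · intro t ht
      rw [interior_Icc] at ht
      rw [(hder t).deriv]
      have h1 : ⟪gradient f (x + t • v), v⟫ - ⟪gradient f x, v⟫
          = ⟪gradient f (x + t • v) - gradient f x, v⟫ := by
        rw [inner_sub_left]
      rw [h1]
      have h2 : ⟪gradient f (x + t • v) - gradient f x, v⟫ ≤ L * t * ‖v‖ ^ 2 := by
        calc ⟪gradient f (x + t • v) - gradient f x, v⟫
            ≤ ‖gradient f (x + t • v) - gradient f x‖ * ‖v‖ := real_inner_le_norm _ _
          _ ≤ (L * ‖x + t • v - x‖) * ‖v‖ := by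
              have := hlip (x + t • v) x
              exact mul_le_mul_of_nonneg_right this (norm_nonneg v)
          _ = L * t * ‖v‖ ^ 2 := by
              have : ‖x + t • v - x‖ = t * ‖v‖ := by
                simp [norm_smul, abs_of_pos ht.1]
              rw [this]; ring
      nlinarith [h2]
  have := hanti (Set.mem_Icc.2 ⟨le_refl 0, zero_le_one⟩)
    (Set.mem_Icc.2 ⟨zero_le_one, le_refl 1⟩) zero_le_one
  simp only [hh, zero_smul, add_zero, one_smul, zero_mul, zero_pow, mul_zero, sub_zero,
    one_pow, mul_one] at this
  have h1 : x + v = y := by rw [hv]; abel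
  rw [h1] at this
  nlinarith [this]

lemma coco_half (f : E → ℝ) (hc : ConvexOn ℝ Set.univ f) (hd : Differentiable ℝ f) (L : ℝ)
    (hL : 0 < L) (hlip : ∀ a b, ‖gradient f a - gradient f b‖ ≤ L * ‖a - b‖) (x y : E) :
    ‖gradient f x - gradient f y‖ ^ 2 / (2 * L) ≤ f x - f y - ⟪gradient f y, x - y⟫ := by
  set g := gradient f x - gradient f y with hg
  set z := x - L⁻¹ • g with hz
  have h1 := subgrad f hc hd y z
  have h2 := descent f hd L hlip x z
  have ezx : z - x = -(L⁻¹ • g) := by rw [hz]; abel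
  have ezy : z - y = (x - y) - L⁻¹ • g := by rw [hz]; abel
  have e1 : ⟪gradient f x, z - x⟫ = -(L⁻¹ * ⟪gradient f x, g⟫) := by
    rw [ezx, inner_neg_right, inner_smul_right]
  have e2 : ⟪gradient f y, z - y⟫ = ⟪gradient f y, x - y⟫ - L⁻¹ * ⟪gradient f y, g⟫ := by
    rw [ezy, inner_sub_right, inner_smul_right]
  have e3 : ‖z - x‖ ^ 2 = L⁻¹ ^ 2 * ‖g‖ ^ 2 := by
    rw [ezx, norm_neg, norm_smul]
    rw [Real.norm_eq_abs, abs_of_pos (inv_pos.2 hL)]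
    ring
  have e4 : ⟪gradient f x, g⟫ - ⟪gradient f y, g⟫ = ‖g‖ ^ 2 := by
    rw [← inner_sub_left, ← hg, real_inner_self_eq_norm_sq]
  rw [e1, e3] at h2
  rw [e2] at h1
  have hL' : L ≠ 0 := ne_of_gt hL
  have e5 : L / 2 * (L⁻¹ ^ 2 * ‖g‖ ^ 2) = ‖g‖ ^ 2 / (2 * L) := by field_simp
  have e7 : L⁻¹ * ⟪gradient f x, g⟫ - L⁻¹ * ⟪gradient f y, g⟫ = ‖g‖ ^ 2 / L := by
    rw [← mul_sub, e4]; field_simp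
  have e8 : ‖g‖ ^ 2 / L = ‖g‖ ^ 2 / (2 * L) + ‖g‖ ^ 2 / (2 * L) := by field_simp; ring
  rw [e5] at h2
  linarith [h1, h2]

lemma grad_mono (f : E → ℝ) (hc : ConvexOn ℝ Set.univ f) (hd : Differentiable ℝ f) (x y : E) :
    0 ≤ ⟪x - y, gradient f x - gradient f y⟫ := by
  have h1 := subgrad f hc hd x y
  have h2 := subgrad f hc hd y x
  have e1 : ⟪gradient f x, y - x⟫ = -⟪gradient f x, x - y⟫ := by
    rw [← inner_neg_right]; congr 1; abel
  rw [e1] at h1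
  have e2 : ⟪x - y, gradient f x - gradient f y⟫
      = ⟪gradient f x, x - y⟫ - ⟪gradient f y, x - y⟫ := by
    rw [inner_sub_right, real_inner_comm (x - y) (gradient f x), real_inner_comm (x - y) (gradient f y)]
  rw [e2]
  linarith

lemma coco (f : E → ℝ) (hc : ConvexOn ℝ Set.univ f) (hd : Differentiable ℝ f) (L : ℝ)
    (hlip : ∀ a b, ‖gradient f a - gradient f b‖ ≤ L * ‖a - b‖) (x y : E) :
    ‖gradient f x - gradient f y‖ ^ 2 ≤ L * ⟪x - y, gradient f x - gradient f y⟫ := by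
  rcases le_or_gt L 0 with hL | hL
  · have h0 : ‖gradient f x - gradient f y‖ ≤ 0 := by
      calc ‖gradient f x - gradient f y‖ ≤ L * ‖x - y‖ := hlip x y
        _ ≤ 0 := mul_nonpos_of_nonpos_of_nonneg hL (norm_nonneg _)
    have hg0 : gradient f x - gradient f y = 0 := by
      rwa [← norm_le_zero_iff]
    rw [hg0]
    simp
  · have h1 := coco_half f hc hd L hL hlip x y
    have h2 := coco_half f hc hd L hL hlip y x
    have enorm : ‖gradient f y - gradient f x‖ = ‖gradient f x - gradient f y‖ :=
      norm_sub_rev _ _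
    rw [enorm] at h2
    have e1 : ⟪gradient f x, y - x⟫ = -⟪gradient f x, x - y⟫ := by
      rw [← inner_neg_right]; congr 1; abel
    rw [e1] at h2
    have e2 : ⟪x - y, gradient f x - gradient f y⟫
        = ⟪gradient f x, x - y⟫ - ⟪gradient f y, x - y⟫ := by
      rw [inner_sub_right, real_inner_comm (x - y) (gradient f x), real_inner_comm (x - y) (gradient f y)]
    rw [e2]
    have hsum : ‖gradient f x - gradient f y‖ ^ 2 / (2 * L) + ‖gradient f x - gradient f y‖ ^ 2 / (2 * L)
        ≤ ⟪gradient f x, x - y⟫ - ⟪gradient f y, x - y⟫ := by linarith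
    have : ‖gradient f x - gradient f y‖ ^ 2 / L
        ≤ ⟪gradient f x, x - y⟫ - ⟪gradient f y, x - y⟫ := by
      have e8 : ‖gradient f x - gradient f y‖ ^ 2 / L
          = ‖gradient f x - gradient f y‖ ^ 2 / (2 * L) + ‖gradient f x - gradient f y‖ ^ 2 / (2 * L) := by
        field_simp; ring
      rw [e8]; exact hsum
    calc ‖gradient f x - gradient f y‖ ^ 2
        = L * (‖gradient f x - gradient f y‖ ^ 2 / L) := by field_simp
      _ ≤ L * (⟪gradient f x, x - y⟫ - ⟪gradient f y, x - y⟫) :=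
          mul_le_mul_of_nonneg_left this (le_of_lt hL)

lemma grad_sum {n : ℕ} (fs : Fin n → E → ℝ) (p : Fin n → ℝ)
    (hd : ∀ i, Differentiable ℝ (fs i)) (x : E) :
    gradient (fun x => ∑ i, p i * fs i x) x = ∑ i, p i • gradient (fs i) x := by
  have h : HasFDerivAt (fun x => ∑ i, p i * fs i x)
      (∑ i, p i • fderiv ℝ (fs i) x) x := by
    apply HasFDerivAt.fun_sum
    intro i _
    exact ((hd i) x).hasFDerivAt.const_mul (p i)
  have e : ∀ i, fderiv ℝ (fs i) x = InnerProductSpace.toDual ℝ E (gradient (fs i) x) := by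
    intro i
    rw [gradient, LinearIsometryEquiv.apply_symm_apply]
  have h2 : (∑ i, p i • fderiv ℝ (fs i) x)
      = InnerProductSpace.toDual ℝ E (∑ i, p i • gradient (fs i) x) := by
    rw [map_sum]
    refine Finset.sum_congr rfl fun i _ => ?_
    rw [e i, LinearIsometryEquiv.map_smul]
  rw [h2] at h
  exact (hasFDerivAt_iff_hasGradientAt.1 h).gradient.trans (by
    rw [LinearIsometryEquiv.symm_apply_apply])

lemma grad_min_zero (F : E → ℝ) (xstar : E) (hmin : ∀ x, F xstar ≤ F x) :
    gradient F xstar = 0 := by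
  have h : IsLocalMin F xstar := Filter.Eventually.of_forall hmin
  rw [gradient, h.fderiv_eq_zero]
  simp

lemma step_bound {n : ℕ} (f : Fin n → E → ℝ) (L : Fin n → ℝ) (supL γ μ : ℝ)
    (p : Fin n → ℝ) (hp : ∀ i, 0 ≤ p i) (hps : ∑ i, p i = 1)
    (hconv : ∀ i, ConvexOn ℝ Set.univ (f i)) (hdiff : ∀ i, Differentiable ℝ (f i))
    (hlip : ∀ i x y, ‖gradient (f i) x - gradient (f i) y‖ ≤ L i * ‖x - y‖)
    (hLsup : ∀ i, L i ≤ supL)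
    (F : E → ℝ) (hF : F = fun x => ∑ i, p i * f i x) (hμ : 0 ≤ μ)
    (hsc : ∀ x y, μ * ‖x - y‖ ^ 2 ≤ ⟪x - y, gradient F x - gradient F y⟫)
    (xstar : E) (hmin : ∀ x, F xstar ≤ F x)
    (σ2 : ℝ) (hσ2 : σ2 = ∑ i, p i * ‖gradient (f i) xstar‖ ^ 2)
    (hγ0 : 0 ≤ γ) (hγL : γ * supL ≤ 1/2)
    (x : E) :
    ∑ i, p i * ‖x - γ • gradient (f i) x - xstar‖ ^ 2
      ≤ (1 - 2*γ*μ*(1 - γ*supL)) * ‖x - xstar‖ ^ 2 + 2*γ^2*σ2 := by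
  have gradF : ∀ z, gradient F z = ∑ i, p i • gradient (f i) z := by
    intro z; rw [hF]; exact grad_sum f p hdiff z
  have gradFstar : gradient F xstar = 0 := grad_min_zero F xstar hmin
  set I : ℝ := ⟪x - xstar, gradient F x⟫ with hI_def
  set S : ℝ := ∑ i, p i * ‖gradient (f i) x‖ ^ 2 with hS_def
  -- inner product identity
  have hinner : ∑ i, p i * ⟪x - xstar, gradient (f i) x⟫ = I := by
    rw [hI_def, gradF x, inner_sum]
    refine Finset.sum_congr rfl fun i _ => ?_
    rw [real_inner_smul_right]
  have hinner2 : ∑ i, p i * ⟪x - xstar, gradient (f i) x - gradient (f i) xstar⟫ = I := by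
    have : gradient F x - gradient F xstar = ∑ i, p i • (gradient (f i) x - gradient (f i) xstar) := by
      rw [gradF x, gradF xstar, ← Finset.sum_sub_distrib]
      refine Finset.sum_congr rfl fun i _ => ?_
      rw [smul_sub]
    have h2 : ⟪x - xstar, gradient F x - gradient F xstar⟫ = I := by
      rw [gradFstar, sub_zero]
    rw [← h2, this, inner_sum]
    refine Finset.sum_congr rfl fun i _ => ?_
    rw [real_inner_smul_right]
  -- expectation of squared gradient norm
  have hS : S ≤ 2 * supL * I + 2 * σ2 := by
    rw [hS_def, hσ2, ← hinner2]
    have hterm : ∀ i, p i * ‖gradient (f i) x‖ ^ 2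
        ≤ 2 * supL * (p i * ⟪x - xstar, gradient (f i) x - gradient (f i) xstar⟫)
          + 2 * (p i * ‖gradient (f i) xstar‖ ^ 2) := by
      intro i
      have hmono := grad_mono (f i) (hconv i) (hdiff i) x xstar
      have hco := coco (f i) (hconv i) (hdiff i) (L i) (hlip i) x xstar
      have hco2 : ‖gradient (f i) x - gradient (f i) xstar‖ ^ 2
          ≤ supL * ⟪x - xstar, gradient (f i) x - gradient (f i) xstar⟫ :=
        hco.trans (mul_le_mul_of_nonneg_right (hLsup i) hmono)
      have hsq : ‖gradient (f i) x‖ ^ 2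
          ≤ 2 * ‖gradient (f i) x - gradient (f i) xstar‖ ^ 2
            + 2 * ‖gradient (f i) xstar‖ ^ 2 := by
        have h1 : ‖gradient (f i) x‖ ≤ ‖gradient (f i) x - gradient (f i) xstar‖
            + ‖gradient (f i) xstar‖ := by
          calc ‖gradient (f i) x‖
              = ‖(gradient (f i) x - gradient (f i) xstar) + gradient (f i) xstar‖ := by
                congr 1; abel
            _ ≤ _ := norm_add_le _ _
        nlinarith [norm_nonneg (gradient (f i) x),
          sq_nonneg (‖gradient (f i) x - gradient (f i) xstar‖ - ‖gradient (f i) xstar‖)]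
      nlinarith [mul_le_mul_of_nonneg_left hsq (hp i), mul_le_mul_of_nonneg_left hco2 (hp i)]
    calc (∑ i, p i * ‖gradient (f i) x‖ ^ 2)
        ≤ ∑ i, (2 * supL * (p i * ⟪x - xstar, gradient (f i) x - gradient (f i) xstar⟫)
            + 2 * (p i * ‖gradient (f i) xstar‖ ^ 2)) :=
          Finset.sum_le_sum fun i _ => hterm i
      _ = 2 * supL * (∑ i, p i * ⟪x - xstar, gradient (f i) x - gradient (f i) xstar⟫)
            + 2 * (∑ i, p i * ‖gradient (f i) xstar‖ ^ 2) := by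
          rw [Finset.sum_add_distrib, ← Finset.mul_sum, ← Finset.mul_sum]
  have hI : μ * ‖x - xstar‖ ^ 2 ≤ I := by
    have := hsc x xstar
    rwa [gradFstar, sub_zero] at this
  -- expansion of each term
  have expand : ∀ i, ‖x - γ • gradient (f i) x - xstar‖ ^ 2
      = ‖x - xstar‖ ^ 2 - 2 * γ * ⟪x - xstar, gradient (f i) x⟫
        + γ ^ 2 * ‖gradient (f i) x‖ ^ 2 := by
    intro i
    have h0 : x - γ • gradient (f i) x - xstar = (x - xstar) - γ • gradient (f i) x := by abel
    rw [h0, norm_sub_sq_real, real_inner_smul_right, norm_smul, Real.norm_eq_abs]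
    rw [mul_pow, sq_abs]
    ring
  have hsum : ∑ i, p i * ‖x - γ • gradient (f i) x - xstar‖ ^ 2
      = ‖x - xstar‖ ^ 2 - 2 * γ * I + γ ^ 2 * S := by
    calc ∑ i, p i * ‖x - γ • gradient (f i) x - xstar‖ ^ 2
        = ∑ i, (p i * ‖x - xstar‖ ^ 2 - 2 * γ * (p i * ⟪x - xstar, gradient (f i) x⟫)
            + γ ^ 2 * (p i * ‖gradient (f i) x‖ ^ 2)) := by
          refine Finset.sum_congr rfl fun i _ => ?_
          rw [expand i]; ring
      _ = ‖x - xstar‖ ^ 2 - 2 * γ * I + γ ^ 2 * S := by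
          rw [Finset.sum_add_distrib, Finset.sum_sub_distrib, ← Finset.sum_mul, hps, one_mul,
            ← Finset.mul_sum, ← Finset.mul_sum, hinner, hS_def]
  rw [hsum]
  have h2γ : 0 ≤ 2 * γ * (1 - γ * supL) := by nlinarith
  nlinarith [mul_le_mul_of_nonneg_left hS (sq_nonneg γ), mul_le_mul_of_nonneg_left hI h2γ]

lemma sum_snoc_fn {n m : ℕ} (g : (Fin (m+1) → Fin n) → ℝ) :
    ∑ s : Fin (m+1) → Fin n, g s = ∑ s' : Fin m → Fin n, ∑ i : Fin n, g (Fin.snoc s' i) := by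
  rw [← Equiv.sum_comp (Fin.snocEquiv (fun _ => Fin n)) g, Fintype.sum_prod_type, Finset.sum_comm]
  rfl

lemma weights_sum {n : ℕ} (p : Fin n → ℝ) (hps : ∑ i, p i = 1) :
    ∀ m : ℕ, ∑ s : Fin m → Fin n, (∏ j, p (s j)) = 1 := by
  intro m
  induction m with
  | zero => simp
  | succ m ih =>
    rw [sum_snoc_fn (fun s => ∏ j, p (s j))]
    have : ∀ (s' : Fin m → Fin n) (i : Fin n),
        (∏ j, p ((Fin.snoc s' i : Fin (m+1) → Fin n) j)) = (∏ j, p (s' j)) * p i := by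
      intro s' i
      rw [Fin.prod_univ_castSucc]
      congr 1
      · exact Finset.prod_congr rfl fun j _ => by rw [Fin.snoc_castSucc]
      · rw [Fin.snoc_last]
    calc (∑ s' : Fin m → Fin n, ∑ i : Fin n, ∏ j, p ((Fin.snoc s' i : Fin (m+1) → Fin n) j))
        = ∑ s' : Fin m → Fin n, (∏ j, p (s' j)) * (∑ i, p i) := by
          refine Finset.sum_congr rfl fun s' _ => ?_
          rw [Finset.mul_sum]
          exact Finset.sum_congr rfl fun i _ => this s' i
      _ = 1 := by rw [hps]; simp [ih]

lemma prod_snoc_p {n m : ℕ} (p : Fin n → ℝ) (s' : Fin m → Fin n) (i : Fin n) :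
    (∏ j, p ((Fin.snoc s' i : Fin (m+1) → Fin n) j)) = (∏ j, p (s' j)) * p i := by
  rw [Fin.prod_univ_castSucc]
  congr 1
  · exact Finset.prod_congr rfl fun j _ => by rw [Fin.snoc_castSucc]
  · rw [Fin.snoc_last]

set_option maxHeartbeats 1000000 in
/-- Corollary 2.2: with step size `γ = με/(2εμ supL + 2σ²)`, after
`k = ⌈2 log(2ε₀/ε) (supL/μ + σ²/(μ²ε))⌉` SGD iterations the expected squared
distance to the optimum is at most `ε`. -/
theorem stmt6 {d n : ℕ} (hn : 0 < n)
    (f : Fin n → EuclideanSpace ℝ (Fin d) → ℝ)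
    (L : Fin n → ℝ) (supL μ γ ε ε₀ : ℝ)
    (p : Fin n → ℝ) (hp : ∀ i, 0 ≤ p i) (hps : ∑ i, p i = 1)
    (hconv : ∀ i, ConvexOn ℝ Set.univ (f i))
    (hdiff : ∀ i, Differentiable ℝ (f i))
    (hlip : ∀ i x y, ‖gradient (f i) x - gradient (f i) y‖ ≤ L i * ‖x - y‖)
    (hLsup : ∀ i, L i ≤ supL) (hsupL : 0 < supL)
    (F : EuclideanSpace ℝ (Fin d) → ℝ) (hF : F = fun x => ∑ i, p i * f i x)
    (hμ : 0 < μ)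
    (hsc : ∀ x y, μ * ‖x - y‖ ^ 2 ≤ ⟪x - y, gradient F x - gradient F y⟫)
    (xstar : EuclideanSpace ℝ (Fin d)) (hmin : ∀ x, F xstar ≤ F x)
    (σ2 : ℝ) (hσ2 : σ2 = ∑ i, p i * ‖gradient (f i) xstar‖ ^ 2)
    (x0 : EuclideanSpace ℝ (Fin d)) (hε₀ : ε₀ = ‖x0 - xstar‖ ^ 2)
    (hε : 0 < ε) (hεsmall : ε < 2 * ε₀)
    (hγ : γ = μ * ε / (2 * ε * μ * supL + 2 * σ2))
    (traj : ∀ k : ℕ, (Fin k → Fin n) → EuclideanSpace ℝ (Fin d))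
    (htraj0 : ∀ s, traj 0 s = x0)
    (htrajS : ∀ k (s : Fin (k + 1) → Fin n),
      traj (k + 1) s = traj k (s ∘ Fin.castSucc) -
        γ • gradient (f (s (Fin.last k))) (traj k (s ∘ Fin.castSucc)))
    (k : ℕ) (hk : k = ⌈2 * Real.log (2 * ε₀ / ε) * (supL / μ + σ2 / (μ ^ 2 * ε))⌉₊) :
    ∑ s : Fin k → Fin n, (∏ j, p (s j)) * ‖traj k s - xstar‖ ^ 2 ≤ ε := by
  -- trivial case d = 0
  rcases Nat.eq_zero_or_pos d with hd | hd
  · subst hd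
    have : ∀ s : Fin k → Fin n, traj k s - xstar = 0 := fun s => Subsingleton.elim _ _
    simp only [this, norm_zero]
    simpa using hε.le
  -- main case
  have hσ2nn : 0 ≤ σ2 := by
    rw [hσ2]
    exact Finset.sum_nonneg fun i _ => mul_nonneg (hp i) (sq_nonneg _)
  have hε₀pos : 0 < ε₀ := by linarith
  have hD : 0 < 2 * ε * μ * supL + 2 * σ2 := by positivity
  have hγval : γ * (2 * ε * μ * supL + 2 * σ2) = μ * ε := by
    rw [hγ]; field_simp
  have hγpos : 0 < γ := by rw [hγ]; positivity
  have hγsupL : γ * supL ≤ 1 / 2 := by nlinarith [hγval, hD, hσ2nn]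
  -- gradient of F
  have gradF : ∀ z, gradient F z = ∑ i, p i • gradient (f i) z := by
    intro z; rw [hF]; exact grad_sum f p hdiff z
  have hFlip : ∀ a b, ‖gradient F a - gradient F b‖ ≤ supL * ‖a - b‖ := by
    intro a b
    rw [gradF a, gradF b, ← Finset.sum_sub_distrib]
    refine (norm_sum_le _ _).trans ?_
    have hterm : ∀ i : Fin n, ‖p i • gradient (f i) a - p i • gradient (f i) b‖
        ≤ p i * (supL * ‖a - b‖) := by
      intro i
      rw [← smul_sub, norm_smul, Real.norm_eq_abs, abs_of_nonneg (hp i)]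
      exact mul_le_mul_of_nonneg_left
        ((hlip i a b).trans (mul_le_mul_of_nonneg_right (hLsup i) (norm_nonneg _))) (hp i)
    calc (∑ i, ‖p i • gradient (f i) a - p i • gradient (f i) b‖)
        ≤ ∑ i, p i * (supL * ‖a - b‖) := Finset.sum_le_sum fun i _ => hterm i
      _ = supL * ‖a - b‖ := by rw [← Finset.sum_mul, hps, one_mul]
  -- μ ≤ supL
  have hμL : μ ≤ supL := by
    set v : EuclideanSpace ℝ (Fin d) := EuclideanSpace.single (⟨0, hd⟩ : Fin d) (1:ℝ) with hv
    have hvnorm : ‖v - 0‖ = 1 := by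
      rw [sub_zero, hv, EuclideanSpace.norm_single, norm_one]
    have h1 := hsc v 0
    have h2 := real_inner_le_norm (v - 0) (gradient F v - gradient F 0)
    have h3 := hFlip v 0
    rw [hvnorm] at h1 h2 h3
    nlinarith [h1, h2, h3]
  have hγμ : γ * μ ≤ 1 / 2 := by nlinarith [hγval, hD, hσ2nn, mul_pos hε hμ]
  -- key step-size inequality
  have hkey : 2 * γ ^ 2 * σ2 ≤ γ * μ * (1 - γ * supL) * ε := by
    have e2 : μ * (1 - γ * supL) * ε - 2 * γ * σ2 = γ * μ * ε * supL := by
      linear_combination -hγval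
    nlinarith [mul_le_mul_of_nonneg_left (le_of_eq e2.symm) hγpos.le,
      mul_pos (mul_pos hγpos (mul_pos hγpos hμ)) (mul_pos hε hsupL)]
  -- the expectation sequence
  set Exp : ℕ → ℝ := fun m => ∑ s : Fin m → Fin n, (∏ j, p (s j)) * ‖traj m s - xstar‖ ^ 2
    with hExp
  clear_value Exp
  have hExp0 : Exp 0 = ε₀ := by
    simp [hExp, htraj0, hε₀]
  set ρ : ℝ := 1 - 2 * γ * μ * (1 - γ * supL) with hρ
  clear_value ρ
  have hρ0 : 0 ≤ ρ := by nlinarith [mul_pos hγpos hμ]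
  have hρle : ρ ≤ 1 - γ * μ := by nlinarith [mul_pos hγpos hμ]
  have hstep : ∀ m, Exp (m + 1) ≤ ρ * Exp m + 2 * γ ^ 2 * σ2 := by
    intro m
    have hEm1 : Exp (m + 1) = ∑ s' : Fin m → Fin n, ∑ i : Fin n,
        ((∏ j, p (s' j)) * p i) *
          ‖traj m s' - γ • gradient (f i) (traj m s') - xstar‖ ^ 2 := by
      simp only [hExp]
      rw [sum_snoc_fn (fun s => (∏ j, p (s j)) * ‖traj (m+1) s - xstar‖ ^ 2)]
      refine Finset.sum_congr rfl fun s' _ => Finset.sum_congr rfl fun i _ => ?_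
      rw [prod_snoc_p, htrajS m (Fin.snoc s' i), Fin.snoc_comp_castSucc, Fin.snoc_last]
    rw [hEm1]
    have hinnerb : ∀ s' : Fin m → Fin n,
        ∑ i : Fin n, ((∏ j, p (s' j)) * p i) *
          ‖traj m s' - γ • gradient (f i) (traj m s') - xstar‖ ^ 2
        ≤ (∏ j, p (s' j)) * (ρ * ‖traj m s' - xstar‖ ^ 2 + 2 * γ ^ 2 * σ2) := by
      intro s'
      have hprodnn : 0 ≤ ∏ j, p (s' j) := Finset.prod_nonneg fun j _ => hp (s' j)
      have hsb := step_bound f L supL γ μ p hp hps hconv hdiff hlip hLsup F hF hμ.le hsc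
        xstar hmin σ2 hσ2 hγpos.le hγsupL (traj m s')
      calc (∑ i : Fin n, ((∏ j, p (s' j)) * p i) *
              ‖traj m s' - γ • gradient (f i) (traj m s') - xstar‖ ^ 2)
          = (∏ j, p (s' j)) * ∑ i : Fin n, p i *
              ‖traj m s' - γ • gradient (f i) (traj m s') - xstar‖ ^ 2 := by
            rw [Finset.mul_sum]
            exact Finset.sum_congr rfl fun i _ => by ring
        _ ≤ (∏ j, p (s' j)) * (ρ * ‖traj m s' - xstar‖ ^ 2 + 2 * γ ^ 2 * σ2) := by
            apply mul_le_mul_of_nonneg_left _ hprodnn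
            rw [hρ]
            exact hsb
    calc (∑ s' : Fin m → Fin n, ∑ i : Fin n, ((∏ j, p (s' j)) * p i) *
            ‖traj m s' - γ • gradient (f i) (traj m s') - xstar‖ ^ 2)
        ≤ ∑ s' : Fin m → Fin n,
            (∏ j, p (s' j)) * (ρ * ‖traj m s' - xstar‖ ^ 2 + 2 * γ ^ 2 * σ2) :=
          Finset.sum_le_sum fun s' _ => hinnerb s'
      _ = ρ * Exp m + 2 * γ ^ 2 * σ2 := by
          rw [hExp]
          simp only [mul_add]
          rw [Finset.sum_add_distrib, Finset.mul_sum]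
          congr 1
          · exact Finset.sum_congr rfl fun s' _ => by ring
          · rw [← Finset.sum_mul, weights_sum p hps m, one_mul]
  -- induction bound
  have hbound : ∀ m, Exp m ≤ (1 - γ * μ) ^ m * ε₀ + ε / 2 := by
    intro m
    induction m with
    | zero => rw [hExp0]; simp; linarith
    | succ m ih =>
      have h1 := hstep m
      have h2 : ρ * Exp m ≤ ρ * ((1 - γ * μ) ^ m * ε₀ + ε / 2) :=
        mul_le_mul_of_nonneg_left ih hρ0
      have hρ₀nn : (0:ℝ) ≤ 1 - γ * μ := by linarith
      have h3 : ρ * ((1 - γ * μ) ^ m * ε₀) ≤ (1 - γ * μ) ^ (m + 1) * ε₀ := by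
        have := mul_le_mul_of_nonneg_right hρle
          (mul_nonneg (pow_nonneg hρ₀nn m) hε₀pos.le)
        calc ρ * ((1 - γ * μ) ^ m * ε₀)
            ≤ (1 - γ * μ) * ((1 - γ * μ) ^ m * ε₀) := this
          _ = (1 - γ * μ) ^ (m + 1) * ε₀ := by ring
      have h4 : ρ * (ε / 2) + 2 * γ ^ 2 * σ2 ≤ ε / 2 := by
        rw [hρ]; nlinarith [hkey]
      calc Exp (m + 1) ≤ ρ * Exp m + 2 * γ ^ 2 * σ2 := h1
        _ ≤ ρ * ((1 - γ * μ) ^ m * ε₀) + ρ * (ε / 2) + 2 * γ ^ 2 * σ2 := by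
            rw [mul_add] at h2; linarith
        _ ≤ (1 - γ * μ) ^ (m + 1) * ε₀ + ε / 2 := by linarith
  -- final numeric bound
  have hρ₀nn : (0:ℝ) ≤ 1 - γ * μ := by linarith
  have hratio : (1:ℝ) < 2 * ε₀ / ε := by
    rw [lt_div_iff₀ hε]; linarith
  have hlognn : 0 ≤ Real.log (2 * ε₀ / ε) := Real.log_nonneg hratio.le
  have hkreal : 2 * Real.log (2 * ε₀ / ε) * (supL / μ + σ2 / (μ ^ 2 * ε)) ≤ (k:ℝ) := by
    rw [hk]; exact Nat.le_ceil _
  have hsum_pos : 0 < supL / μ + σ2 / (μ ^ 2 * ε) := by positivity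
  have e3 : γ * μ * (2 * (supL / μ + σ2 / (μ ^ 2 * ε))) = 1 := by
    rw [hγ]
    field_simp
  have hγμk : Real.log (2 * ε₀ / ε) ≤ γ * μ * (k:ℝ) := by
    have := mul_le_mul_of_nonneg_left hkreal (mul_nonneg hγpos.le hμ.le)
    calc Real.log (2 * ε₀ / ε)
        = Real.log (2 * ε₀ / ε) * (γ * μ * (2 * (supL / μ + σ2 / (μ ^ 2 * ε)))) := by
          rw [e3, mul_one]
      _ = γ * μ * (2 * Real.log (2 * ε₀ / ε) * (supL / μ + σ2 / (μ ^ 2 * ε))) := by ring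
      _ ≤ γ * μ * (k:ℝ) := this
  have hpow : (1 - γ * μ) ^ k * ε₀ ≤ ε / 2 := by
    have h1 : (1 - γ * μ) ^ k ≤ Real.exp (-(γ * μ)) ^ k :=
      pow_le_pow_left₀ hρ₀nn (by linarith [Real.add_one_le_exp (-(γ * μ))]) k
    have h2 : Real.exp (-(γ * μ)) ^ k = Real.exp (-(γ * μ * (k:ℝ))) := by
      rw [← Real.exp_nat_mul]; congr 1; ring
    have h3 : Real.exp (-(γ * μ * (k:ℝ))) ≤ Real.exp (-(Real.log (2 * ε₀ / ε))) :=
      Real.exp_le_exp.2 (by linarith)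
    have h4 : Real.exp (-(Real.log (2 * ε₀ / ε))) = ε / (2 * ε₀) := by
      rw [Real.exp_neg, Real.exp_log (by positivity)]
      rw [inv_div]
    have h5 : (1 - γ * μ) ^ k ≤ ε / (2 * ε₀) := by
      rw [← h4]; exact h1.trans (h2 ▸ h3)
    calc (1 - γ * μ) ^ k * ε₀ ≤ (ε / (2 * ε₀)) * ε₀ :=
          mul_le_mul_of_nonneg_right h5 hε₀pos.le
      _ = ε / 2 := by field_simp
  calc (∑ s : Fin k → Fin n, (∏ j, p (s j)) * ‖traj k s - xstar‖ ^ 2)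
      = Exp k := by rw [hExp]
    _ ≤ (1 - γ * μ) ^ k * ε₀ + ε / 2 := hbound k
    _ ≤ ε / 2 + ε / 2 := by linarith [hpow]
    _ = ε := by ring
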